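/- Let $G$ be a compact group and $K$ an algebraically closed topological field. Let $\rho \colon G \to \mathrm{GL}_2(K)$ be a nonscalar semisimple continuous representation. If $\rho \cong \eta \otimes \rho$ for some nontrivial character $\eta \colon G \to K^\times$, then $\eta^2 = 1$, $\ker\eta$ has index 2 in $G$, and the image $\rho(\ker \eta)$ is abelian. -/

import Mathlib

lemma comm_of_commute_nonscalar {K : Type*} [Field K] (P A B : Matrix (Fin 2) (Fin 2) K)
    (hP : ¬ ∃ c : K, P = c • (1 : Matrix (Fin 2) (Fin 2) K))
    (hA : A * P = P * A) (hB : B * P = P * B) : A * B = B * A := by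
  have hP' : P 0 1 ≠ 0 ∨ P 1 0 ≠ 0 ∨ P 0 0 ≠ P 1 1 := by
    by_contra h
    push_neg at h
    obtain ⟨h1, h2, h3⟩ := h
    exact hP ⟨P 0 0, by ext i j; fin_cases i <;> fin_cases j <;>
      simp [Matrix.one_apply, h1, h2, h3]⟩
  set p := P 0 0 with hp
  set q := P 0 1 with hq
  set r := P 1 0 with hr
  set s := P 1 1 with hs
  set a := A 0 0; set b := A 0 1; set c := A 1 0; set d := A 1 1
  set a' := B 0 0; set b' := B 0 1; set c' := B 1 0; set d' := B 1 1
  have eA1 : q * c = r * b := by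
    have := congr_fun (congr_fun hA 0) 0
    simp [Matrix.mul_apply, Fin.sum_univ_two] at this
    linear_combination -this
  have eA2 : q * (a - d) = b * (p - s) := by
    have := congr_fun (congr_fun hA 0) 1
    simp [Matrix.mul_apply, Fin.sum_univ_two] at this
    linear_combination this
  have eA3 : r * (a - d) = c * (p - s) := by
    have := congr_fun (congr_fun hA 1) 0
    simp [Matrix.mul_apply, Fin.sum_univ_two] at this
    linear_combination -this
  have eB1 : q * c' = r * b' := by
    have := congr_fun (congr_fun hB 0) 0
    simp [Matrix.mul_apply, Fin.sum_univ_two] at this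
    linear_combination -this
  have eB2 : q * (a' - d') = b' * (p - s) := by
    have := congr_fun (congr_fun hB 0) 1
    simp [Matrix.mul_apply, Fin.sum_univ_two] at this
    linear_combination this
  have eB3 : r * (a' - d') = c' * (p - s) := by
    have := congr_fun (congr_fun hB 1) 0
    simp [Matrix.mul_apply, Fin.sum_univ_two] at this
    linear_combination -this
  have key : b * c' = b' * c ∧ b' * (a - d) = b * (a' - d') ∧ c' * (a - d) = c * (a' - d') := by
    rcases ne_or_eq q 0 with hq0 | hq0
    · refine ⟨?_, ?_, ?_⟩
      · apply mul_left_cancel₀ hq0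
        linear_combination b * eB1 - b' * eA1
      · apply mul_left_cancel₀ hq0
        linear_combination b' * eA2 - b * eB2
      · apply mul_left_cancel₀ hq0
        apply mul_left_cancel₀ hq0
        linear_combination (q * (a - d)) * eB1 + (r * b') * eA2 - (q * (a' - d')) * eA1 - (r * b) * eB2
    rcases ne_or_eq r 0 with hr0 | hr0
    · refine ⟨?_, ?_, ?_⟩
      · apply mul_left_cancel₀ hr0
        linear_combination c * eB1 - c' * eA1
      · apply mul_left_cancel₀ hr0
        apply mul_left_cancel₀ hr0
        linear_combination (q * c') * eA3 + (r * (a' - d')) * eA1 - (r * (a - d)) * eB1 - (q * c) * eB3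
      · apply mul_left_cancel₀ hr0
        linear_combination c' * eA3 - c * eB3
    · have hps : p - s ≠ 0 := by
        rcases hP' with h | h | h
        · exact absurd hq0 h
        · exact absurd hr0 h
        · exact sub_ne_zero.mpr h
      have hb : b = 0 := by
        have : b * (p - s) = 0 := by rw [← eA2, hq0, zero_mul]
        exact (mul_eq_zero.mp this).resolve_right hps
      have hc : c = 0 := by
        have : c * (p - s) = 0 := by rw [← eA3, hr0, zero_mul]
        exact (mul_eq_zero.mp this).resolve_right hps
      have hb' : b' = 0 := by
        have : b' * (p - s) = 0 := by rw [← eB2, hq0, zero_mul]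
        exact (mul_eq_zero.mp this).resolve_right hps
      have hc' : c' = 0 := by
        have : c' * (p - s) = 0 := by rw [← eB3, hr0, zero_mul]
        exact (mul_eq_zero.mp this).resolve_right hps
      refine ⟨by rw [hb, hb', zero_mul, zero_mul], by rw [hb, hb', zero_mul, zero_mul],
        by rw [hc, hc', zero_mul, zero_mul]⟩
  obtain ⟨G1, G2, G3⟩ := key
  ext i j
  fin_cases i <;> fin_cases j <;> simp [Matrix.mul_apply, Fin.sum_univ_two]
  · linear_combination G1
  · linear_combination G2
  · linear_combination -G3
  · linear_combination -G1

/-- A `2`-dimensional representation (given by matrices) is semisimple if every invariant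
subspace has an invariant complement. -/
def Semisimple2 {G K : Type*} [Group G] [Field K]
    (ρ : G → Matrix (Fin 2) (Fin 2) K) : Prop :=
  ∀ W : Submodule K (Fin 2 → K), (∀ g : G, ∀ v ∈ W, (ρ g).mulVec v ∈ W) →
    ∃ W' : Submodule K (Fin 2 → K), (∀ g : G, ∀ v ∈ W', (ρ g).mulVec v ∈ W') ∧ IsCompl W W'

/-- Let `G` be a compact group, `K` an algebraically closed topological
field of characteristic not `2`, and `ρ : G → GL₂(K)` a nonscalar semisimple continuous
representation.  If `ρ ≅ η ⊗ ρ` for a nontrivial character `η`, then `η² = 1`, `ker η`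
has index `2` and `ρ(ker η)` is abelian. -/
theorem stmt_9 {G K : Type*} [Group G] [TopologicalSpace G] [IsTopologicalGroup G]
    [CompactSpace G] [Field K] [IsAlgClosed K] [TopologicalSpace K] [IsTopologicalRing K]
    (hchar : (2 : K) ≠ 0)
    (ρ : G →* (Matrix (Fin 2) (Fin 2) K)ˣ)
    (hcont : Continuous fun g => (ρ g : Matrix (Fin 2) (Fin 2) K))
    (hss : Semisimple2 (fun g => (ρ g : Matrix (Fin 2) (Fin 2) K)))
    (hns : ¬ ∀ g : G, ∃ c : K, (ρ g : Matrix (Fin 2) (Fin 2) K) = c • (1 : Matrix (Fin 2) (Fin 2) K))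
    (η : G →* Kˣ) (hηcont : Continuous fun g => (η g : K)) (hη : η ≠ 1)
    (P : (Matrix (Fin 2) (Fin 2) K)ˣ)
    (hiso : ∀ g : G, (η g : K) • (ρ g : Matrix (Fin 2) (Fin 2) K) =
      (P : Matrix (Fin 2) (Fin 2) K) * (ρ g : Matrix (Fin 2) (Fin 2) K) *
        ((P⁻¹ : (Matrix (Fin 2) (Fin 2) K)ˣ) : Matrix (Fin 2) (Fin 2) K)) :
    (∀ g : G, η g * η g = 1) ∧ η.ker.index = 2 ∧
      ∀ g ∈ η.ker, ∀ h ∈ η.ker, ρ g * ρ h = ρ h * ρ g := by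
  -- Step 1: η g * η g = 1 for all g (via determinants)
  have hsq : ∀ g : G, η g * η g = 1 := by
    intro g
    have hd := congrArg Matrix.det (hiso g)
    rw [Matrix.det_smul, Matrix.det_mul, Matrix.det_mul] at hd
    have hPP : ((P : Matrix (Fin 2) (Fin 2) K)).det *
        (((P⁻¹ : (Matrix (Fin 2) (Fin 2) K)ˣ)) : Matrix (Fin 2) (Fin 2) K).det = 1 := by
      rw [← Matrix.det_mul, Units.mul_inv, Matrix.det_one]
    have hρ : ((ρ g : Matrix (Fin 2) (Fin 2) K)).det ≠ 0 := by
      have : ((ρ g : Matrix (Fin 2) (Fin 2) K)).det *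
          (((ρ g)⁻¹ : (Matrix (Fin 2) (Fin 2) K)ˣ) : Matrix (Fin 2) (Fin 2) K).det = 1 := by
        rw [← Matrix.det_mul, Units.mul_inv, Matrix.det_one]
      exact left_ne_zero_of_mul_eq_one this
    have hz : ((η g : K) * (η g : K) - 1) * ((ρ g : Matrix (Fin 2) (Fin 2) K)).det = 0 := by
      simp only [Fintype.card_fin] at hd
      linear_combination hd + ((ρ g : Matrix (Fin 2) (Fin 2) K)).det * hPP
    have hK := (mul_eq_zero.mp hz).resolve_right hρ
    exact Units.ext (by push_cast; linear_combination hK)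
  -- each value of η is 1 or -1
  have hval : ∀ g : G, η g = 1 ∨ η g = -1 := by
    intro g
    have hK : (η g : K) * (η g : K) = 1 := by
      have := congrArg (Units.val) (hsq g); push_cast at this; exact this
    rcases mul_self_eq_one_iff.mp hK with h | h
    · left; exact Units.ext (by push_cast; exact h)
    · right; exact Units.ext (by push_cast [h]; ring)
  have hne : (1 : Kˣ) ≠ -1 := by
    intro h
    have := congrArg (Units.val) h
    push_cast at this
    exact hchar (by linear_combination this)
  -- a g₀ with η g₀ = -1
  obtain ⟨g₀, hg₀⟩ : ∃ g : G, η g ≠ 1 := by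
    by_contra h
    push_neg at h
    exact hη (MonoidHom.ext fun g => by simpa using h g)
  have hg₀' : η g₀ = -1 := (hval g₀).resolve_left hg₀
  -- Step 2: index of the kernel is 2
  have hindex : η.ker.index = 2 := by
    rw [Subgroup.index_ker]
    have hrange : (η.range : Set Kˣ) = {1, -1} := by
      ext x
      constructor
      · rintro ⟨g, rfl⟩
        rcases hval g with h | h <;> simp [h]
      · rintro (rfl | rfl)
        · exact ⟨1, map_one η⟩
        · exact ⟨g₀, hg₀'⟩
    rw [← SetLike.coe_sort_coe, hrange, Nat.card_coe_set_eq, Set.ncard_pair hne]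
  refine ⟨hsq, hindex, ?_⟩
  -- Step 3: ρ(ker η) is abelian
  -- P is nonscalar
  have hPns : ¬ ∃ c : K, (P : Matrix (Fin 2) (Fin 2) K) = c • (1 : Matrix (Fin 2) (Fin 2) K) := by
    rintro ⟨c, hc⟩
    have h := hiso g₀
    have h2 := congrArg (· * (P : Matrix (Fin 2) (Fin 2) K)) h
    simp only [smul_mul_assoc, mul_assoc, Units.inv_mul, mul_one] at h2
    rw [hg₀'] at h2
    rw [hc] at h2
    push_cast at h2
    have h3 : ((2 : K) * c) • (ρ g₀ : Matrix (Fin 2) (Fin 2) K) = 0 := by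
      have e1 : (ρ g₀ : Matrix (Fin 2) (Fin 2) K) * (c • 1) =
          c • (ρ g₀ : Matrix (Fin 2) (Fin 2) K) := by
        rw [Matrix.mul_smul, mul_one]
      have e2 : (c • (1 : Matrix (Fin 2) (Fin 2) K)) * (ρ g₀ : Matrix (Fin 2) (Fin 2) K) =
          c • (ρ g₀ : Matrix (Fin 2) (Fin 2) K) := by
        rw [Matrix.smul_mul, one_mul]
      rw [e1, e2] at h2
      have h4 : ((2 : K) * c) • (ρ g₀ : Matrix (Fin 2) (Fin 2) K) =
          c • (ρ g₀ : Matrix (Fin 2) (Fin 2) K) -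
            (-1 : K) • c • (ρ g₀ : Matrix (Fin 2) (Fin 2) K) := by module
      rw [h2, sub_self] at h4
      exact h4
    have hc0 : c ≠ 0 := by
      intro hc0
      rw [hc0, zero_smul] at hc
      have : ((P : Matrix (Fin 2) (Fin 2) K)).det ≠ 0 := by
        have : ((P : Matrix (Fin 2) (Fin 2) K)).det *
            (((P⁻¹ : (Matrix (Fin 2) (Fin 2) K)ˣ)) : Matrix (Fin 2) (Fin 2) K).det = 1 := by
          rw [← Matrix.det_mul, Units.mul_inv, Matrix.det_one]
        exact left_ne_zero_of_mul_eq_one this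
      rw [hc] at this
      simp at this
    have h2c : (2 : K) * c ≠ 0 := mul_ne_zero hchar hc0
    have hM0 : (ρ g₀ : Matrix (Fin 2) (Fin 2) K) = 0 :=
      (smul_eq_zero.mp h3).resolve_left h2c
    have : (ρ g₀ : Matrix (Fin 2) (Fin 2) K) *
        (((ρ g₀)⁻¹ : (Matrix (Fin 2) (Fin 2) K)ˣ) : Matrix (Fin 2) (Fin 2) K) = 1 :=
      Units.mul_inv _
    rw [hM0, zero_mul] at this
    exact one_ne_zero this.symm
  -- elements of ker commute with P
  have hcomm : ∀ g ∈ η.ker, (ρ g : Matrix (Fin 2) (Fin 2) K) * (P : Matrix (Fin 2) (Fin 2) K) =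
      (P : Matrix (Fin 2) (Fin 2) K) * (ρ g : Matrix (Fin 2) (Fin 2) K) := by
    intro g hg
    have h := hiso g
    rw [MonoidHom.mem_ker.mp hg] at h
    simp only [Units.val_one, one_smul] at h
    have h2 := congrArg (· * (P : Matrix (Fin 2) (Fin 2) K)) h
    simp only [mul_assoc, Units.inv_mul, mul_one] at h2
    exact h2
  intro g hg h hh
  have := comm_of_commute_nonscalar (P : Matrix (Fin 2) (Fin 2) K)
    (ρ g : Matrix (Fin 2) (Fin 2) K) (ρ h : Matrix (Fin 2) (Fin 2) K)
    hPns (hcomm g hg) (hcomm h hh)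
  exact Units.ext (by push_cast; exact this)
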